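/- For finite nonnegative Borel measures μ, ν on a Polish space X with finite first moment, the Wasserstein-type distance W₁(μ,ν) := W_{1,m}(μ̄_m, ν̄_m) (where m ≥ μ(X) ∨ ν(X), μ̄_m := μ + (m−μ(X))δ_∂, ν̄_m := ν + (m−ν(X))δ_∂, and W_{1,m} is the classical 1-Wasserstein distance between measures of total mass m on the extended space X̄) does not depend on the choice of m ≥ μ(X) ∨ ν(X). -/

import Mathlib

open MeasureTheory ENNReal

noncomputable instance optionMeasurableSpace {X : Type*} [m : MeasurableSpace X] :
    MeasurableSpace (Option X) := m.map some

/-- The extended distance on `X ∪ {∂}` with `d(x,∂) = d(x,x₀) + 1`. -/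
noncomputable def extDist {X : Type*} [MetricSpace X] (x₀ : X) :
    Option X → Option X → ℝ
  | some x, some y => dist x y
  | some x, none => dist x x₀ + 1
  | none, some y => dist y x₀ + 1
  | none, none => 0

/-- The embedding of a finite measure `μ` on `X` as a measure of total mass `m`
on `X ∪ {∂}`, putting the missing mass `m - μ(X)` at the cemetery point `∂`. -/
noncomputable def extendMeasure {X : Type*} [MeasurableSpace X]
    (μ : Measure X) (m : ℝ≥0∞) : Measure (Option X) :=
  μ.map some + (m - μ Set.univ) • Measure.dirac (none : Option X)

/-- Classical Wasserstein-1 distance (via couplings) between two measures of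
equal total mass on the extended space `X ∪ {∂}`. -/
noncomputable def W1m {X : Type*} [MetricSpace X] [MeasurableSpace X] (x₀ : X)
    (μ' ν' : Measure (Option X)) : ℝ≥0∞ :=
  ⨅ (π : Measure (Option X × Option X)) (_ : π.fst = μ') (_ : π.snd = ν'),
    ∫⁻ p, ENNReal.ofReal (extDist x₀ p.1 p.2) ∂π

set_option linter.unusedSectionVars false
set_option linter.unusedVariables false

section AuxOption

variable {X : Type*} [MeasurableSpace X]

lemma measurable_some' : Measurable (some : X → Option X) := fun _ hs => hs

lemma measurableSet_option' {s : Set (Option X)} (hs : MeasurableSet (some ⁻¹' s)) :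
    MeasurableSet s := hs

lemma measurableSet_none' : MeasurableSet ({none} : Set (Option X)) := by
  apply measurableSet_option'
  have : (some ⁻¹' ({none} : Set (Option X))) = ∅ := by ext x; simp
  rw [this]; exact MeasurableSet.empty

instance instMSCOption [MeasurableSingletonClass X] :
    MeasurableSingletonClass (Option X) := by
  constructor
  rintro (_ | x)
  · exact measurableSet_none'
  · apply measurableSet_option'
    have : (some ⁻¹' ({some x} : Set (Option X))) = {x} := by ext y; simp
    rw [this]; exact measurableSet_singleton x

lemma measurable_option' {γ : Type*} [MeasurableSpace γ] {f : Option X → γ}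
    (h : Measurable (f ∘ some)) : Measurable f := fun _s hs => h hs

end AuxOption

section AuxCost

variable {X : Type*} [MetricSpace X] [MeasurableSpace X] [BorelSpace X]

/-- Bounding function `e(u) = d(u, ∂)` with `e(∂) = 0`. -/
noncomputable def ebar (x₀ : X) : Option X → ℝ≥0∞ :=
  fun u => ENNReal.ofReal (extDist x₀ u none)

lemma ebar_measurable (x₀ : X) : Measurable (ebar x₀) := by
  apply measurable_option'
  have : (ebar x₀) ∘ some = fun x => ENNReal.ofReal (dist x x₀ + 1) := rfl
  rw [this]
  exact (((continuous_id.dist continuous_const).add continuous_const).measurable).ennreal_ofReal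

lemma ebar_none (x₀ : X) : ebar x₀ none = 0 := by simp [ebar, extDist]

lemma extDist_none_comm (x₀ : X) (v : Option X) :
    extDist x₀ none v = extDist x₀ v none := by cases v <;> rfl

lemma extDist_nonneg (x₀ : X) (u v : Option X) : 0 ≤ extDist x₀ u v := by
  cases u <;> cases v <;> simp [extDist] <;> positivity

lemma ofReal_extDist_le (x₀ : X) (u v : Option X) :
    ENNReal.ofReal (extDist x₀ u v) ≤ ebar x₀ u + ebar x₀ v := by
  cases u with
  | none => cases v with
    | none => simp [extDist]
    | some y => simp [ebar, extDist]
  | some x => cases v with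
    | none => simp [ebar, extDist]
    | some y =>
      have h1 : dist x y ≤ (dist x x₀ + 1) + (dist y x₀ + 1) := by
        have := dist_triangle x x₀ y
        have : dist x y ≤ dist x x₀ + dist y x₀ := by
          simpa [dist_comm] using dist_triangle x x₀ y
        linarith
      calc ENNReal.ofReal (extDist x₀ (some x) (some y))
          ≤ ENNReal.ofReal ((dist x x₀ + 1) + (dist y x₀ + 1)) :=
            ENNReal.ofReal_le_ofReal h1
        _ = ENNReal.ofReal (dist x x₀ + 1) + ENNReal.ofReal (dist y x₀ + 1) := by
            rw [ENNReal.ofReal_add (by positivity) (by positivity)]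
        _ = ebar x₀ (some x) + ebar x₀ (some y) := rfl

end AuxCost

section AuxMarginals

variable {α β : Type*} [MeasurableSpace α] [MeasurableSpace β]

lemma fst_restrict_singleton_prod (π : Measure (α × β)) {a : α}
    (ha : MeasurableSet ({a} : Set α)) (S : Set β) :
    (π.restrict ({a} ×ˢ S)).fst = π ({a} ×ˢ S) • Measure.dirac a := by
  ext s hs
  rw [Measure.fst_apply hs, Measure.restrict_apply (measurable_fst hs),
    Measure.smul_apply, Measure.dirac_apply' _ hs, smul_eq_mul]
  by_cases has : a ∈ s
  · have h1 : (Prod.fst ⁻¹' s) ∩ ({a} ×ˢ S) = {a} ×ˢ S := by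
      ext p
      constructor
      · rintro ⟨_, h2⟩; exact h2
      · rintro ⟨hp1, hp2⟩
        exact ⟨by simp only [Set.mem_preimage]; rw [Set.mem_singleton_iff] at hp1; rw [hp1]; exact has,
          ⟨hp1, hp2⟩⟩
    rw [h1]
    simp [Set.indicator_of_mem has]
  · have h1 : (Prod.fst ⁻¹' s) ∩ ({a} ×ˢ S) = ∅ := by
      apply Set.eq_empty_iff_forall_notMem.mpr
      rintro ⟨p1, p2⟩ ⟨hp, hp1, -⟩
      exact has (by rw [show p1 = a from hp1] at hp; exact hp)
    rw [h1]
    simp [Set.indicator_of_notMem has]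

lemma snd_restrict_prod_singleton (π : Measure (α × β)) {b : β}
    (hb : MeasurableSet ({b} : Set β)) (S : Set α) :
    (π.restrict (S ×ˢ {b})).snd = π (S ×ˢ {b}) • Measure.dirac b := by
  ext s hs
  rw [Measure.snd_apply hs, Measure.restrict_apply (measurable_snd hs),
    Measure.smul_apply, Measure.dirac_apply' _ hs, smul_eq_mul]
  by_cases hbs : b ∈ s
  · have h1 : (Prod.snd ⁻¹' s) ∩ (S ×ˢ {b}) = S ×ˢ {b} := by
      ext p
      constructor
      · rintro ⟨_, h2⟩; exact h2
      · rintro ⟨hp1, hp2⟩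
        exact ⟨by simp only [Set.mem_preimage]; rw [Set.mem_singleton_iff] at hp2; rw [hp2]; exact hbs,
          ⟨hp1, hp2⟩⟩
    rw [h1]
    simp [Set.indicator_of_mem hbs]
  · have h1 : (Prod.snd ⁻¹' s) ∩ (S ×ˢ {b}) = ∅ := by
      apply Set.eq_empty_iff_forall_notMem.mpr
      rintro ⟨p1, p2⟩ ⟨hp, -, hp2⟩
      exact hbs (by rw [show p2 = b from hp2] at hp; exact hp)
    rw [h1]
    simp [Set.indicator_of_notMem hbs]

lemma measure_add_right_cancel' {γ : Type*} [MeasurableSpace γ] {ρ₁ ρ₂ σ : Measure γ}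
    (hσ : σ Set.univ ≠ ∞) (h : ρ₁ + σ = ρ₂ + σ) : ρ₁ = ρ₂ := by
  ext s hs
  have h' : ρ₁ s + σ s = ρ₂ s + σ s := by
    have := congrArg (fun m : Measure γ => m s) h
    simpa using this
  exact (ENNReal.add_left_inj
    (ne_top_of_le_ne_top hσ (measure_mono (Set.subset_univ s)))).mp h'

lemma disjoint_prod_left' {s₁ s₂ : Set α} {t₁ t₂ : Set β} (h : Disjoint s₁ s₂) :
    Disjoint (s₁ ×ˢ t₁) (s₂ ×ˢ t₂) := by
  rw [Set.disjoint_left] at h ⊢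
  rintro p ⟨h1, _⟩ ⟨h2, _⟩
  exact h h1 h2

lemma disjoint_prod_right' {s₁ s₂ : Set α} {t₁ t₂ : Set β} (h : Disjoint t₁ t₂) :
    Disjoint (s₁ ×ˢ t₁) (s₂ ×ˢ t₂) := by
  rw [Set.disjoint_left] at h ⊢
  rintro p ⟨_, h1⟩ ⟨_, h2⟩
  exact h h1 h2

end AuxMarginals


section Main

variable {X : Type*} [MetricSpace X] [MeasurableSpace X] [BorelSpace X]

/-- Easy direction: increasing the mass level decreases (weakly) the cost, by putting the
extra mass on `(∂, ∂)`. -/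
lemma W1m_anti (x₀ : X) (μ ν : Measure X) {m m' : ℝ≥0∞}
    (hμ : μ Set.univ ≤ m) (hν : ν Set.univ ≤ m) (hmm : m ≤ m') :
    W1m x₀ (extendMeasure μ m') (extendMeasure ν m')
      ≤ W1m x₀ (extendMeasure μ m) (extendMeasure ν m) := by
  unfold W1m
  refine le_iInf fun π => le_iInf fun hfst => le_iInf fun hsnd => ?_
  set c := m' - m with hc
  set π' := π + c • Measure.dirac ((none, none) : Option X × Option X) with hπ'
  have hfstδ : (c • Measure.dirac ((none, none) : Option X × Option X)).fst
      = c • Measure.dirac (none : Option X) := by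
    unfold Measure.fst
    rw [Measure.map_smul, Measure.map_dirac' measurable_fst]
  have hsndδ : (c • Measure.dirac ((none, none) : Option X × Option X)).snd
      = c • Measure.dirac (none : Option X) := by
    unfold Measure.snd
    rw [Measure.map_smul, Measure.map_dirac' measurable_snd]
  have keyμ : (m - μ Set.univ) + c = m' - μ Set.univ := by
    rw [hc, add_comm]
    exact tsub_add_tsub_cancel hmm hμ
  have keyν : (m - ν Set.univ) + c = m' - ν Set.univ := by
    rw [hc, add_comm]
    exact tsub_add_tsub_cancel hmm hν
  have hfst' : π'.fst = extendMeasure μ m' := by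
    rw [hπ', Measure.fst_add, hfst, hfstδ, extendMeasure, extendMeasure, add_assoc,
      ← add_smul, keyμ]
  have hsnd' : π'.snd = extendMeasure ν m' := by
    rw [hπ', Measure.snd_add, hsnd, hsndδ, extendMeasure, extendMeasure, add_assoc,
      ← add_smul, keyν]
  refine iInf_le_of_le π' (iInf_le_of_le hfst' (iInf_le_of_le hsnd' (le_of_eq ?_)))
  rw [hπ', lintegral_add_measure, lintegral_smul_measure, lintegral_dirac]
  simp [extDist]

end Main

section Main2

variable {X : Type*} [MetricSpace X] [MeasurableSpace X] [BorelSpace X]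

lemma extendMeasure_univ (μ : Measure X) {m : ℝ≥0∞} (h : μ Set.univ ≤ m) :
    extendMeasure μ m Set.univ = m := by
  rw [extendMeasure, Measure.add_apply,
    Measure.map_apply measurable_some' MeasurableSet.univ, Set.preimage_univ,
    Measure.smul_apply, Measure.dirac_apply' _ MeasurableSet.univ, smul_eq_mul]
  simp only [Set.indicator_univ, Pi.one_apply, mul_one]
  exact add_tsub_cancel_of_le h

lemma extendMeasure_none (μ : Measure X) (m : ℝ≥0∞) :
    extendMeasure μ m {none} = m - μ Set.univ := by
  rw [extendMeasure, Measure.add_apply,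
    Measure.map_apply measurable_some' measurableSet_none',
    show (some ⁻¹' ({none} : Set (Option X))) = (∅ : Set X) by ext x; simp,
    measure_empty, zero_add, Measure.smul_apply,
    Measure.dirac_apply' _ measurableSet_none', smul_eq_mul]
  simp

/-- Hard direction: decreasing the mass level decreases (weakly) the cost, by rerouting
the mass paired with the cemetery through a product coupling. -/
lemma W1m_le (x₀ : X) (μ ν : Measure X) {m m' : ℝ≥0∞} (hm' : m' ≠ ∞)
    (hμ : μ Set.univ ≤ m) (hν : ν Set.univ ≤ m) (hmm : m ≤ m') :
    W1m x₀ (extendMeasure μ m) (extendMeasure ν m)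
      ≤ W1m x₀ (extendMeasure μ m') (extendMeasure ν m') := by
  have hμ' : μ Set.univ ≤ m' := hμ.trans hmm
  have hν' : ν Set.univ ≤ m' := hν.trans hmm
  have hm : m ≠ ∞ := ne_top_of_le_ne_top hm' hmm
  unfold W1m
  refine le_iInf fun π => le_iInf fun hfst => le_iInf fun hsnd => ?_
  have hπuniv : π Set.univ = m' := by
    have h := congrArg (fun ρ : Measure (Option X) => ρ Set.univ) hfst
    rw [Measure.fst_univ] at h
    rw [h, extendMeasure_univ μ hμ']
  haveI : IsFiniteMeasure π := ⟨by rw [hπuniv]; exact hm'.lt_top⟩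
  -- the four pieces of the coupling
  have hN : MeasurableSet ({none} : Set (Option X)) := measurableSet_none'
  have hT : MeasurableSet ({none}ᶜ : Set (Option X)) := hN.compl
  set A : Set (Option X × Option X) := {none}ᶜ ×ˢ {none}ᶜ with hAdef
  set B : Set (Option X × Option X) := {none} ×ˢ {none}ᶜ with hBdef
  set C : Set (Option X × Option X) := {none}ᶜ ×ˢ {none} with hCdef
  set D : Set (Option X × Option X) := {none} ×ˢ {none} with hDdef
  have hsplit : (π.restrict A + π.restrict C) + (π.restrict B + π.restrict D) = π := by
    have e1 : π.restrict A + π.restrict C = π.restrict ({none}ᶜ ×ˢ Set.univ) := by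
      rw [← Measure.restrict_union (disjoint_prod_right' disjoint_compl_left) (hT.prod hN)]
      congr 1
      rw [← Set.prod_union, Set.compl_union_self]
    have e2 : π.restrict B + π.restrict D = π.restrict ({none} ×ˢ Set.univ) := by
      rw [← Measure.restrict_union (disjoint_prod_right' disjoint_compl_left) (hN.prod hN)]
      congr 1
      rw [← Set.prod_union, Set.compl_union_self]
    rw [e1, e2,
      ← Measure.restrict_union (disjoint_prod_left' disjoint_compl_left)
        (hN.prod MeasurableSet.univ),
      ← Set.union_prod, Set.compl_union_self, Set.univ_prod_univ, Measure.restrict_univ]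
  set αb : Measure (Option X) := (π.restrict B).snd with hαdef
  set βb : Measure (Option X) := (π.restrict C).fst with hβdef
  -- marginals of the pieces
  have hBfst : (π.restrict B).fst = π B • Measure.dirac (none : Option X) :=
    fst_restrict_singleton_prod π hN _
  have hDfst : (π.restrict D).fst = π D • Measure.dirac (none : Option X) :=
    fst_restrict_singleton_prod π hN _
  have hCsnd : (π.restrict C).snd = π C • Measure.dirac (none : Option X) :=
    snd_restrict_prod_singleton π hN _
  have hDsnd : (π.restrict D).snd = π D • Measure.dirac (none : Option X) :=
    snd_restrict_prod_singleton π hN _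
  have hfstsplit : ((π.restrict A).fst + βb) + (π B + π D) • Measure.dirac (none : Option X)
      = extendMeasure μ m' := by
    rw [← hfst]
    conv_rhs => rw [← hsplit]
    rw [Measure.fst_add, Measure.fst_add, Measure.fst_add, hBfst, hDfst, add_smul, hβdef]
  have hsndsplit : ((π.restrict A).snd + αb) + (π C + π D) • Measure.dirac (none : Option X)
      = extendMeasure ν m' := by
    rw [← hsnd]
    conv_rhs => rw [← hsplit]
    rw [Measure.snd_add, Measure.snd_add, Measure.snd_add, hCsnd, hDsnd, add_smul, hαdef,
      add_add_add_comm]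
  -- vanishing at none of the X-parts
  have hfstA0 : (π.restrict A).fst {none} = 0 := by
    rw [Measure.fst_apply measurableSet_none',
      Measure.restrict_apply (measurable_fst measurableSet_none')]
    have : (Prod.fst ⁻¹' ({none} : Set (Option X))) ∩ A = ∅ := by
      apply Set.eq_empty_iff_forall_notMem.mpr
      rintro ⟨p1, p2⟩ ⟨hp, hp1, -⟩
      exact hp1 hp
    rw [this, measure_empty]
  have hβ0 : βb {none} = 0 := by
    rw [hβdef, Measure.fst_apply measurableSet_none',
      Measure.restrict_apply (measurable_fst measurableSet_none')]
    have : (Prod.fst ⁻¹' ({none} : Set (Option X))) ∩ C = ∅ := by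
      apply Set.eq_empty_iff_forall_notMem.mpr
      rintro ⟨p1, p2⟩ ⟨hp, hp1, -⟩
      exact hp1 hp
    rw [this, measure_empty]
  have hsndA0 : (π.restrict A).snd {none} = 0 := by
    rw [Measure.snd_apply measurableSet_none',
      Measure.restrict_apply (measurable_snd measurableSet_none')]
    have : (Prod.snd ⁻¹' ({none} : Set (Option X))) ∩ A = ∅ := by
      apply Set.eq_empty_iff_forall_notMem.mpr
      rintro ⟨p1, p2⟩ ⟨hp, -, hp2⟩
      exact hp2 hp
    rw [this, measure_empty]
  have hα0 : αb {none} = 0 := by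
    rw [hαdef, Measure.snd_apply measurableSet_none',
      Measure.restrict_apply (measurable_snd measurableSet_none')]
    have : (Prod.snd ⁻¹' ({none} : Set (Option X))) ∩ B = ∅ := by
      apply Set.eq_empty_iff_forall_notMem.mpr
      rintro ⟨p1, p2⟩ ⟨hp, -, hp2⟩
      exact hp2 hp
    rw [this, measure_empty]
  -- the mass at none
  have hBD : π B + π D = m' - μ Set.univ := by
    have h := congrArg (fun ρ : Measure (Option X) => ρ {none}) hfstsplit
    simp only [Measure.add_apply, Measure.smul_apply, smul_eq_mul] at h
    rw [hfstA0, hβ0, Measure.dirac_apply' _ measurableSet_none', extendMeasure_none] at h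
    simpa using h
  have hCD : π C + π D = m' - ν Set.univ := by
    have h := congrArg (fun ρ : Measure (Option X) => ρ {none}) hsndsplit
    simp only [Measure.add_apply, Measure.smul_apply, smul_eq_mul] at h
    rw [hsndA0, hα0, Measure.dirac_apply' _ measurableSet_none', extendMeasure_none] at h
    simpa using h
  -- identify the X-parts of the marginals
  have hACμ : (π.restrict A).fst + βb = μ.map some := by
    apply measure_add_right_cancel'
      (σ := (m' - μ Set.univ) • Measure.dirac (none : Option X))
    · simp only [Measure.smul_apply, smul_eq_mul]
      exact ENNReal.mul_ne_top (ne_top_of_le_ne_top hm' tsub_le_self)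
        (by simp [Measure.dirac_apply' _ MeasurableSet.univ,
          Set.indicator_of_mem (Set.mem_univ _)])
    · rw [← hBD, hfstsplit, extendMeasure, hBD]
  have hACν : (π.restrict A).snd + αb = ν.map some := by
    apply measure_add_right_cancel'
      (σ := (m' - ν Set.univ) • Measure.dirac (none : Option X))
    · simp only [Measure.smul_apply, smul_eq_mul]
      exact ENNReal.mul_ne_top (ne_top_of_le_ne_top hm' tsub_le_self)
        (by simp [Measure.dirac_apply' _ MeasurableSet.univ,
          Set.indicator_of_mem (Set.mem_univ _)])
    · rw [← hCD, hsndsplit, extendMeasure, hCD]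
  -- the two factors of the rerouting coupling
  set κ₁ : Measure (Option X) := βb + (m - μ Set.univ) • Measure.dirac none with hκ₁def
  set κ₂ : Measure (Option X) := αb + (m - ν Set.univ) • Measure.dirac none with hκ₂def
  have hβuniv : βb Set.univ = π C := by
    rw [hβdef, Measure.fst_univ, Measure.restrict_apply_univ]
  have hαuniv : αb Set.univ = π B := by
    rw [hαdef, Measure.snd_univ, Measure.restrict_apply_univ]
  have hδuniv : Measure.dirac (none : Option X) Set.univ = 1 := by
    simp [Measure.dirac_apply' _ MeasurableSet.univ, Set.indicator_of_mem (Set.mem_univ _)]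
  have hκ₁univ : κ₁ Set.univ = π C + (m - μ Set.univ) := by
    rw [hκ₁def, Measure.add_apply, hβuniv, Measure.smul_apply, hδuniv, smul_eq_mul, mul_one]
  have hκ₂univ : κ₂ Set.univ = π B + (m - ν Set.univ) := by
    rw [hκ₂def, Measure.add_apply, hαuniv, Measure.smul_apply, hδuniv, smul_eq_mul, mul_one]
  set r : ℝ≥0∞ := κ₁ Set.univ with hrdef
  -- the two factors have the same total mass
  have hmass : κ₂ Set.univ = r := by
    rw [hκ₂univ, hκ₁univ]
    have e1 : (π B + π D) + μ Set.univ = m' := by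
      rw [hBD]; exact tsub_add_cancel_of_le hμ'
    have e2 : (π C + π D) + ν Set.univ = m' := by
      rw [hCD]; exact tsub_add_cancel_of_le hν'
    have e3 : (π B + μ Set.univ) + π D = (π C + ν Set.univ) + π D := by
      calc (π B + μ Set.univ) + π D = (π B + π D) + μ Set.univ := by ring
        _ = m' := e1
        _ = (π C + π D) + ν Set.univ := e2.symm
        _ = (π C + ν Set.univ) + π D := by ring
    have e4 : π B + μ Set.univ = π C + ν Set.univ :=
      (ENNReal.add_left_inj (measure_ne_top π D)).mp e3
    have c1 : (m - ν Set.univ) + ν Set.univ = m := tsub_add_cancel_of_le hν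
    have c2 : (m - μ Set.univ) + μ Set.univ = m := tsub_add_cancel_of_le hμ
    have e5 : (π B + (m - ν Set.univ)) + (μ Set.univ + ν Set.univ)
        = (π C + (m - μ Set.univ)) + (μ Set.univ + ν Set.univ) := by
      calc (π B + (m - ν Set.univ)) + (μ Set.univ + ν Set.univ)
          = (π B + μ Set.univ) + ((m - ν Set.univ) + ν Set.univ) := by ring
        _ = (π B + μ Set.univ) + m := by rw [c1]
        _ = (π C + ν Set.univ) + m := by rw [e4]
        _ = (π C + ν Set.univ) + ((m - μ Set.univ) + μ Set.univ) := by rw [c2]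
        _ = (π C + (m - μ Set.univ)) + (μ Set.univ + ν Set.univ) := by ring
    exact (ENNReal.add_left_inj (ENNReal.add_ne_top.mpr
      ⟨ne_top_of_le_ne_top hm hμ, ne_top_of_le_ne_top hm hν⟩)).mp e5
  have hr : r ≠ ∞ := by
    rw [hκ₁univ]
    exact ENNReal.add_ne_top.mpr ⟨measure_ne_top π C, ne_top_of_le_ne_top hm tsub_le_self⟩
  haveI : IsFiniteMeasure κ₁ := ⟨by rw [← hrdef]; exact hr.lt_top⟩
  haveI : IsFiniteMeasure κ₂ := ⟨by rw [hmass]; exact hr.lt_top⟩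
  -- the rerouted coupling
  set π' : Measure (Option X × Option X) := π.restrict A + r⁻¹ • (κ₁.prod κ₂) with hπ'def
  have hzero : r = 0 → κ₁ = 0 ∧ κ₂ = 0 :=
    fun h0 => ⟨Measure.measure_univ_eq_zero.mp (hrdef ▸ h0),
      Measure.measure_univ_eq_zero.mp (by rw [hmass]; exact h0)⟩
  have hprodfst : (r⁻¹ • (κ₁.prod κ₂)).fst = κ₁ := by
    unfold Measure.fst
    rw [Measure.map_smul, Measure.map_fst_prod, hmass]
    rcases eq_or_ne r 0 with h0 | h0
    · simp [h0, (hzero h0).1]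
    · rw [smul_smul, ENNReal.inv_mul_cancel h0 hr, one_smul]
  have hprodsnd : (r⁻¹ • (κ₁.prod κ₂)).snd = κ₂ := by
    unfold Measure.snd
    rw [Measure.map_smul, Measure.map_snd_prod, ← hrdef]
    rcases eq_or_ne r 0 with h0 | h0
    · simp [h0, (hzero h0).2]
    · rw [smul_smul, ENNReal.inv_mul_cancel h0 hr, one_smul]
  have hπ'fst : π'.fst = extendMeasure μ m := by
    rw [hπ'def, Measure.fst_add, hprodfst, extendMeasure, hκ₁def, ← add_assoc, hACμ]
  have hπ'snd : π'.snd = extendMeasure ν m := by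
    rw [hπ'def, Measure.snd_add, hprodsnd, extendMeasure, hκ₂def, ← add_assoc, hACν]
  -- cost estimates
  set f : Option X × Option X → ℝ≥0∞ :=
    fun p => ENNReal.ofReal (extDist x₀ p.1 p.2) with hfdef
  have hmeas1 : Measurable fun p : Option X × Option X => ebar x₀ p.1 :=
    (ebar_measurable x₀).comp measurable_fst
  have hmeas2 : Measurable fun p : Option X × Option X => ebar x₀ p.2 :=
    (ebar_measurable x₀).comp measurable_snd
  have e3 : ∫⁻ u, ebar x₀ u ∂κ₁ = ∫⁻ p, f p ∂(π.restrict C) := by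
    rw [hκ₁def, lintegral_add_measure, lintegral_smul_measure, lintegral_dirac, ebar_none,
      smul_zero, add_zero, hβdef]
    unfold Measure.fst
    rw [lintegral_map (ebar_measurable x₀) measurable_fst]
    refine lintegral_congr_ae ?_
    filter_upwards [ae_restrict_mem (hT.prod hN)] with p hp
    obtain ⟨-, hp2⟩ := hp
    rw [hfdef]
    simp only
    rw [show p.2 = none from hp2]
    rfl
  have e4 : ∫⁻ u, ebar x₀ u ∂κ₂ = ∫⁻ p, f p ∂(π.restrict B) := by
    rw [hκ₂def, lintegral_add_measure, lintegral_smul_measure, lintegral_dirac, ebar_none,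
      smul_zero, add_zero, hαdef]
    unfold Measure.snd
    rw [lintegral_map (ebar_measurable x₀) measurable_snd]
    refine lintegral_congr_ae ?_
    filter_upwards [ae_restrict_mem (hN.prod hT)] with p hp
    obtain ⟨hp1, -⟩ := hp
    rw [hfdef]
    simp only
    rw [show p.1 = none from hp1, extDist_none_comm]
    rfl
  have e1 : ∫⁻ p, ebar x₀ p.1 ∂(κ₁.prod κ₂) = r * ∫⁻ u, ebar x₀ u ∂κ₁ := by
    rw [← lintegral_map (ebar_measurable x₀) measurable_fst, Measure.map_fst_prod, hmass,
      lintegral_smul_measure, smul_eq_mul]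
  have e2 : ∫⁻ p, ebar x₀ p.2 ∂(κ₁.prod κ₂) = r * ∫⁻ u, ebar x₀ u ∂κ₂ := by
    rw [← lintegral_map (ebar_measurable x₀) measurable_snd, Measure.map_snd_prod, ← hrdef,
      lintegral_smul_measure, smul_eq_mul]
  have hprodcost : ∫⁻ p, f p ∂(κ₁.prod κ₂)
      ≤ r * (∫⁻ p, f p ∂(π.restrict C) + ∫⁻ p, f p ∂(π.restrict B)) := by
    calc ∫⁻ p, f p ∂(κ₁.prod κ₂)
        ≤ ∫⁻ p, (ebar x₀ p.1 + ebar x₀ p.2) ∂(κ₁.prod κ₂) :=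
          lintegral_mono fun p => ofReal_extDist_le x₀ p.1 p.2
      _ = (∫⁻ p, ebar x₀ p.1 ∂(κ₁.prod κ₂)) + ∫⁻ p, ebar x₀ p.2 ∂(κ₁.prod κ₂) :=
          lintegral_add_left hmeas1 _
      _ = r * (∫⁻ p, f p ∂(π.restrict C) + ∫⁻ p, f p ∂(π.restrict B)) := by
          rw [e1, e2, e3, e4, mul_add]
  have hinv : r⁻¹ * r ≤ 1 := by
    rcases eq_or_ne r 0 with h0 | h0
    · simp [h0]
    · rw [ENNReal.inv_mul_cancel h0 hr]
  have hle : r⁻¹ * ∫⁻ p, f p ∂(κ₁.prod κ₂)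
      ≤ ∫⁻ p, f p ∂(π.restrict C) + ∫⁻ p, f p ∂(π.restrict B) := by
    calc r⁻¹ * ∫⁻ p, f p ∂(κ₁.prod κ₂)
        ≤ r⁻¹ * (r * (∫⁻ p, f p ∂(π.restrict C) + ∫⁻ p, f p ∂(π.restrict B))) :=
          mul_le_mul_right hprodcost _
      _ = (r⁻¹ * r) * (∫⁻ p, f p ∂(π.restrict C) + ∫⁻ p, f p ∂(π.restrict B)) := by
          rw [mul_assoc]
      _ ≤ 1 * (∫⁻ p, f p ∂(π.restrict C) + ∫⁻ p, f p ∂(π.restrict B)) :=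
          mul_le_mul_left hinv _
      _ = ∫⁻ p, f p ∂(π.restrict C) + ∫⁻ p, f p ∂(π.restrict B) := one_mul _
  refine iInf_le_of_le π' (iInf_le_of_le hπ'fst (iInf_le_of_le hπ'snd ?_))
  calc ∫⁻ p, f p ∂π'
      = (∫⁻ p, f p ∂(π.restrict A)) + r⁻¹ * ∫⁻ p, f p ∂(κ₁.prod κ₂) := by
        rw [hπ'def, lintegral_add_measure, lintegral_smul_measure, smul_eq_mul]
    _ ≤ (∫⁻ p, f p ∂(π.restrict A))
        + (∫⁻ p, f p ∂(π.restrict C) + ∫⁻ p, f p ∂(π.restrict B)) := add_le_add_right hle _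
    _ = ∫⁻ p, f p ∂((π.restrict A + π.restrict C) + π.restrict B) := by
        rw [lintegral_add_measure, lintegral_add_measure, add_assoc]
    _ ≤ ∫⁻ p, f p ∂π := by
        refine lintegral_mono' ?_ le_rfl
        conv_rhs => rw [← hsplit]
        refine Measure.le_iff.mpr fun s hs => ?_
        simp only [Measure.coe_add, Pi.add_apply]
        exact add_le_add le_rfl le_self_add

end Main2


/-- the Wasserstein-type distance `W₁(μ,ν) = W_{1,m}(μ̄_m, ν̄_m)` on finite
nonnegative measures with finite first moment does not depend on the choice of the
mass level `m ≥ μ(X) ∨ ν(X)`. -/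
theorem W1_independent_of_mass {X : Type*} [MetricSpace X] [Nonempty X]
    [CompleteSpace X] [SecondCountableTopology X]
    [MeasurableSpace X] [BorelSpace X] (x₀ : X)
    (μ ν : Measure X) [IsFiniteMeasure μ] [IsFiniteMeasure ν]
    (hμ : ∫⁻ x, ENNReal.ofReal (dist x x₀) ∂μ ≠ ∞)
    (hν : ∫⁻ x, ENNReal.ofReal (dist x x₀) ∂ν ≠ ∞)
    (m₁ m₂ : ℝ≥0∞) (hm₁ : m₁ ≠ ∞) (hm₂ : m₂ ≠ ∞)
    (h₁ : μ Set.univ ⊔ ν Set.univ ≤ m₁) (h₂ : μ Set.univ ⊔ ν Set.univ ≤ m₂) :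
    W1m x₀ (extendMeasure μ m₁) (extendMeasure ν m₁)
      = W1m x₀ (extendMeasure μ m₂) (extendMeasure ν m₂) := by
  have hμ₁ : μ Set.univ ≤ m₁ := le_trans le_sup_left h₁
  have hν₁ : ν Set.univ ≤ m₁ := le_trans le_sup_right h₁
  have hμ₂ : μ Set.univ ≤ m₂ := le_trans le_sup_left h₂
  have hν₂ : ν Set.univ ≤ m₂ := le_trans le_sup_right h₂
  rcases le_total m₁ m₂ with h | h
  · exact le_antisymm (W1m_le x₀ μ ν hm₂ hμ₁ hν₁ h) (W1m_anti x₀ μ ν hμ₁ hν₁ h)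
  · exact le_antisymm (W1m_anti x₀ μ ν hμ₂ hν₂ h) (W1m_le x₀ μ ν hm₁ hμ₂ hν₂ h)
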